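/- Let f be a quadratic homogeneous vector field on ℝⁿ (each component a homogeneous quadratic polynomial), with Kahan map Φ_f(x,ε) = (I - εf'(x))⁻¹x (defined where the matrix is invertible). Then Φ_f(x,ε) satisfies the reversibility property Φ_f(·,ε)⁻¹ = Φ_f(·,-ε), i.e. if x̃ = (I - εf'(x))⁻¹x then x = (I + εf'(x̃))⁻¹x̃. -/

import Mathlib

open Matrix

/-- The Jacobian matrix of a vector field `f : ℝⁿ → ℝⁿ`. -/
noncomputable def jac {ι : Type*} [Fintype ι] [DecidableEq ι]
    (f : (ι → ℝ) → (ι → ℝ)) (x : ι → ℝ) : Matrix ι ι ℝ :=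
  fun i j => fderiv ℝ (fun y => f y i) x (Pi.single j 1)

lemma jac_mulVec (n : ℕ) (Q : (Fin n → ℝ) →ₗ[ℝ] (Fin n → ℝ) →ₗ[ℝ] (Fin n → ℝ))
    (hQsymm : ∀ x y, Q x y = Q y x)
    (f : (Fin n → ℝ) → (Fin n → ℝ)) (hf : ∀ x, f x = Q x x)
    (x v : Fin n → ℝ) : (jac f x).mulVec v = (2:ℝ) • Q x v := by
  classical
  let Q1 : (Fin n → ℝ) →ₗ[ℝ] ((Fin n → ℝ) →L[ℝ] (Fin n → ℝ)) :=
    { toFun := fun y => (Q y).toContinuousLinearMap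
      map_add' := by intro a b; ext w i; simp
      map_smul' := by intro c a; ext w i; simp }
  let Q2 : (Fin n → ℝ) →L[ℝ] (Fin n → ℝ) →L[ℝ] (Fin n → ℝ) := Q1.toContinuousLinearMap
  have hb : IsBoundedBilinearMap ℝ (fun p : (Fin n → ℝ) × (Fin n → ℝ) => Q2 p.1 p.2) :=
    Q2.isBoundedBilinearMap
  set L := (hb.deriv (x, x)).comp
      (((ContinuousLinearMap.id ℝ (Fin n → ℝ)).prod (ContinuousLinearMap.id ℝ (Fin n → ℝ)))) with hL
  have hd : HasFDerivAt (fun y : Fin n → ℝ => Q y y) L x := by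
    have hpair : HasFDerivAt (fun y : Fin n → ℝ => (y, y))
        ((ContinuousLinearMap.id ℝ (Fin n → ℝ)).prod (ContinuousLinearMap.id ℝ (Fin n → ℝ))) x :=
      HasFDerivAt.prodMk (hasFDerivAt_id x) (hasFDerivAt_id x)
    exact HasFDerivAt.comp (f := fun y : Fin n → ℝ => (y, y)) x (hb.hasFDerivAt (x, x)) hpair
  have hjac : ∀ i j, jac f x i j = 2 * Q x (Pi.single j 1) i := by
    intro i j
    have hdi : HasFDerivAt (fun y : Fin n → ℝ => Q y y i)
        ((ContinuousLinearMap.proj i).comp L) x :=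
      ((ContinuousLinearMap.proj (R := ℝ) (φ := fun _ : Fin n => ℝ) i).hasFDerivAt).comp x hd
    have hfi : (fun y : Fin n → ℝ => f y i) = fun y : Fin n → ℝ => Q y y i := by
      funext y; rw [hf]
    have : jac f x i j = ((ContinuousLinearMap.proj i).comp L) (Pi.single j 1) := by
      rw [jac, hfi, hdi.fderiv]
    rw [this]
    have hder : L (Pi.single j 1) = Q x (Pi.single j 1) + Q (Pi.single j 1) x := by
      rw [hL]
      simp only [ContinuousLinearMap.comp_apply, ContinuousLinearMap.prod_apply,
        ContinuousLinearMap.id_apply]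
      rw [hb.deriv_apply]
      rfl
    simp only [ContinuousLinearMap.comp_apply, hder]
    have := hQsymm x (Pi.single j 1)
    simp [this]
    ring
  funext i
  have hv : v = ∑ j, v j • (Pi.single j 1 : Fin n → ℝ) := by
    funext k
    simp [Finset.sum_apply, Pi.single_apply]
  have hQxv : Q x v = ∑ j, v j • Q x (Pi.single j 1) := by
    conv_lhs => rw [hv]
    simp [map_sum]
  rw [Matrix.mulVec]
  simp only [dotProduct, hjac, Pi.smul_apply, hQxv, Finset.sum_apply,
    smul_eq_mul, Finset.mul_sum]
  apply Finset.sum_congr rfl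
  intro j _
  ring

/-- Reversibility of the Kahan map of a homogeneous quadratic vector field
`f(x) = Q(x,x)` (with `Q` symmetric bilinear): if `xt = (I - εf'(x))⁻¹x`, then
`x = (I + εf'(xt))⁻¹xt`, i.e. `Φ_f(·,ε)⁻¹ = Φ_f(·,-ε)`. -/
theorem kahan_reversibility
    (n : ℕ) (Q : (Fin n → ℝ) →ₗ[ℝ] (Fin n → ℝ) →ₗ[ℝ] (Fin n → ℝ))
    (hQsymm : ∀ x y, Q x y = Q y x)
    (f : (Fin n → ℝ) → (Fin n → ℝ)) (hf : ∀ x, f x = Q x x)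
    (ε : ℝ) (x xt : Fin n → ℝ)
    (hinv : IsUnit (1 - ε • jac f x).det)
    (hxt : xt = (1 - ε • jac f x)⁻¹.mulVec x)
    (hinv' : IsUnit (1 + ε • jac f xt).det) :
    x = (1 + ε • jac f xt)⁻¹.mulVec xt := by
  have h1 : (1 - ε • jac f x).mulVec xt = x := by
    rw [hxt, Matrix.mulVec_mulVec, Matrix.mul_nonsing_inv _ hinv, Matrix.one_mulVec]
  have e1 : xt - ε • ((2:ℝ) • Q x xt) = x := by
    rw [Matrix.sub_mulVec, Matrix.one_mulVec, Matrix.smul_mulVec,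
      jac_mulVec n Q hQsymm f hf x xt] at h1
    exact h1
  have h2 : (1 + ε • jac f xt).mulVec x = xt := by
    rw [Matrix.add_mulVec, Matrix.one_mulVec, Matrix.smul_mulVec,
      jac_mulVec n Q hQsymm f hf xt x, hQsymm xt x]
    exact (sub_eq_iff_eq_add.mp e1).symm
  calc x = ((1 + ε • jac f xt)⁻¹ * (1 + ε • jac f xt)).mulVec x := by
        rw [Matrix.nonsing_inv_mul _ hinv', Matrix.one_mulVec]
    _ = (1 + ε • jac f xt)⁻¹.mulVec ((1 + ε • jac f xt).mulVec x) :=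
        (Matrix.mulVec_mulVec _ _ _).symm
    _ = (1 + ε • jac f xt)⁻¹.mulVec xt := by rw [h2]
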